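/- Let D be a probability distribution on [0,1] × {0,1}, and let q(p) = E[y | p]. Then for every positive integer m and every index i in {0,...,m}, the soft-binned quantity Σ_{j≤i} π_j·max(q_j - (i+1)/m, 0) + Σ_{j>i} π_j·max(i/m - q_j, 0) is at most sup over μ in [0,1] of E[max(q - μ, 0)·1[p ≤ μ] + max(μ - q, 0)·1[p > μ]]. In particular, SCDL_m(D) ≤ CDL(D), where CDL(D) is at least this supremum. -/

import Mathlib

open Finset

/-- Triangular weight function `w_i(x) = max(1 - |m·x - i|, 0)`. -/
noncomputable def tri (m i : ℕ) (x : ℝ) : ℝ := max (1 - |(m : ℝ) * x - (i : ℝ)|) 0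

/-- Bin weight `π_i = E[w_i(p)]` for a finitely supported distribution given by
a finite set `J` of atoms with probabilities `ν` and prediction map `p`. -/
noncomputable def binW {α : Type*} (m : ℕ) (J : Finset α) (ν : α → ℝ) (p : α → ℝ)
    (i : ℕ) : ℝ :=
  ∑ z ∈ J, ν z * tri m i (p z)

/-- Bin conditional mean `q_i = E[w_i(p)·y] / π_i` (zero if `π_i = 0`, by the
convention of division by zero). -/
noncomputable def binQ {α : Type*} (m : ℕ) (J : Finset α) (ν : α → ℝ) (p y : α → ℝ)
    (i : ℕ) : ℝ :=
  (∑ z ∈ J, ν z * tri m i (p z) * y z) / binW m J ν p i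

/-- Soft-binned calibration fixed decision loss at index `i`:
`Σ_{j≤i} π_j·max(q_j - (i+1)/m, 0) + Σ_{j>i} π_j·max(i/m - q_j, 0)`. -/
noncomputable def SCFDL {α : Type*} (m : ℕ) (J : Finset α) (ν : α → ℝ) (p y : α → ℝ)
    (i : ℕ) : ℝ :=
  ∑ j ∈ Finset.range (i + 1), binW m J ν p j * max (binQ m J ν p y j - ((i : ℝ) + 1) / m) 0
    + ∑ j ∈ Finset.Icc (i + 1) m, binW m J ν p j * max ((i : ℝ) / m - binQ m J ν p y j) 0

/-- `SCDL_m(D) = max_{i=0,...,m} SCFDL_{m,i}(D)`. -/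
noncomputable def SCDLm {α : Type*} (m : ℕ) (J : Finset α) (ν : α → ℝ) (p y : α → ℝ) : ℝ :=
  Finset.sup' (Finset.range (m + 1)) (Finset.nonempty_range_iff.mpr (Nat.succ_ne_zero m))
    (SCFDL m J ν p y)

/-- `SCDL(D) = inf over m ∈ {2,4,8,...} of max(SCDL_m(D), 1/m)`. -/
noncomputable def SCDL {α : Type*} (J : Finset α) (ν : α → ℝ) (p y : α → ℝ) : ℝ :=
  ⨅ k : ℕ, max (SCDLm (2 ^ (k + 1)) J ν p y) (1 / 2 ^ (k + 1))

/-- The true conditional probability `q(p₀) = E[y | p = p₀]` for a finitely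
supported distribution. -/
noncomputable def condMean (S : Finset (ℝ × ℝ)) (μ : ℝ × ℝ → ℝ) (p₀ : ℝ) : ℝ :=
  (∑ z ∈ S, if z.1 = p₀ then μ z * z.2 else 0) /
    (∑ z ∈ S, if z.1 = p₀ then μ z else 0)

/-- `E[max(q - t, 0)·1[p ≤ t] + max(t - q, 0)·1[p > t]]` with `q = E[y|p]`. -/
noncomputable def fixedLoss (S : Finset (ℝ × ℝ)) (μ : ℝ × ℝ → ℝ) (t : ℝ) : ℝ :=
  ∑ z ∈ S, μ z *
    (if z.1 ≤ t then max (condMean S μ z.1 - t) 0 else max (t - condMean S μ z.1) 0)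

/-! ### Auxiliary lemmas -/

section Aux

open MeasureTheory intervalIntegral

lemma tri_nonneg (m i : ℕ) (x : ℝ) : 0 ≤ tri m i x := le_max_right _ _

lemma sum_max_abs (i : ℕ) {u : ℝ} (hu : 0 ≤ u) :
    ∑ j ∈ Finset.range (i+1), max (1 - |u - (j:ℝ)|) 0 = max (min ((i:ℝ)+1-u) 1) 0 := by
  induction i with
  | zero =>
    rw [Finset.sum_range_one]
    rw [Nat.cast_zero, sub_zero, abs_of_nonneg hu, zero_add,
      min_eq_left (by linarith)]
  | succ n ih =>
    rw [Finset.sum_range_succ, ih]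
    push_cast
    rcases le_total u ((n:ℝ)+1) with h | h
    · rw [abs_of_nonpos (by linarith)]
      simp only [max_def, min_def]
      split_ifs <;> linarith
    · rw [abs_of_nonneg (by linarith)]
      simp only [max_def, min_def]
      split_ifs <;> linarith

lemma jensen_max {α : Type*} (J : Finset α) (a v : α → ℝ) (ha : ∀ z ∈ J, 0 ≤ a z) (c : ℝ) :
    (∑ z ∈ J, a z) * max ((∑ z ∈ J, a z * v z) / (∑ z ∈ J, a z) - c) 0
      ≤ ∑ z ∈ J, a z * max (v z - c) 0 := by
  have hW0 : 0 ≤ ∑ z ∈ J, a z := Finset.sum_nonneg ha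
  have hRHS0 : 0 ≤ ∑ z ∈ J, a z * max (v z - c) 0 :=
    Finset.sum_nonneg fun z hz => mul_nonneg (ha z hz) (le_max_right _ _)
  rcases hW0.eq_or_lt with h | h
  · rw [← h, zero_mul]; exact hRHS0
  · rw [mul_max_of_nonneg _ _ hW0, mul_zero, mul_sub,
      mul_div_cancel₀ _ (ne_of_gt h)]
    refine max_le ?_ hRHS0
    calc ∑ z ∈ J, a z * v z - (∑ z ∈ J, a z) * c
        = ∑ z ∈ J, a z * (v z - c) := by
          simp [mul_sub, Finset.sum_sub_distrib, Finset.sum_mul]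
      _ ≤ ∑ z ∈ J, a z * max (v z - c) 0 :=
          Finset.sum_le_sum fun z hz =>
            mul_le_mul_of_nonneg_left (le_max_left _ _) (ha z hz)

lemma jensen_max' {α : Type*} (J : Finset α) (a v : α → ℝ) (ha : ∀ z ∈ J, 0 ≤ a z) (c : ℝ) :
    (∑ z ∈ J, a z) * max (c - (∑ z ∈ J, a z * v z) / (∑ z ∈ J, a z)) 0
      ≤ ∑ z ∈ J, a z * max (c - v z) 0 := by
  have hW0 : 0 ≤ ∑ z ∈ J, a z := Finset.sum_nonneg ha
  have hRHS0 : 0 ≤ ∑ z ∈ J, a z * max (c - v z) 0 :=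
    Finset.sum_nonneg fun z hz => mul_nonneg (ha z hz) (le_max_right _ _)
  rcases hW0.eq_or_lt with h | h
  · rw [← h, zero_mul]; exact hRHS0
  · rw [mul_max_of_nonneg _ _ hW0, mul_zero, mul_sub,
      mul_div_cancel₀ _ (ne_of_gt h)]
    refine max_le ?_ hRHS0
    calc (∑ z ∈ J, a z) * c - ∑ z ∈ J, a z * v z
        = ∑ z ∈ J, a z * (c - v z) := by
          simp [mul_sub, Finset.sum_sub_distrib, Finset.sum_mul]
      _ ≤ ∑ z ∈ J, a z * max (c - v z) 0 :=
          Finset.sum_le_sum fun z hz =>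
            mul_le_mul_of_nonneg_left (le_max_left _ _) (ha z hz)

lemma regroup (S : Finset (ℝ×ℝ)) (μ : ℝ×ℝ→ℝ) (hμ : ∀ z ∈ S, 0 ≤ μ z) (f : ℝ → ℝ) :
    ∑ z ∈ S, μ z * f z.1 * z.2 = ∑ z ∈ S, μ z * f z.1 * condMean S μ z.1 := by
  rw [← Finset.sum_fiberwise_of_maps_to (g := Prod.fst) (t := S.image Prod.fst)
      (fun x hx => Finset.mem_image_of_mem _ hx) (fun z => μ z * f z.1 * z.2),
    ← Finset.sum_fiberwise_of_maps_to (g := Prod.fst) (t := S.image Prod.fst)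
      (fun x hx => Finset.mem_image_of_mem _ hx) (fun z => μ z * f z.1 * condMean S μ z.1)]
  refine Finset.sum_congr rfl fun p₀ _ => ?_
  have key : ∑ z ∈ S.filter (fun z => z.1 = p₀), μ z * z.2
      = condMean S μ p₀ * ∑ z ∈ S.filter (fun z => z.1 = p₀), μ z := by
    have hD : ∑ z ∈ S.filter (fun z => z.1 = p₀), μ z
        = ∑ z ∈ S, if z.1 = p₀ then μ z else 0 := Finset.sum_filter _ _
    have hN : ∑ z ∈ S.filter (fun z => z.1 = p₀), μ z * z.2
        = ∑ z ∈ S, if z.1 = p₀ then μ z * z.2 else 0 := Finset.sum_filter _ _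
    rcases eq_or_ne (∑ z ∈ S.filter (fun z => z.1 = p₀), μ z) 0 with hD0 | hD0
    · have hz : ∀ z ∈ S.filter (fun z => z.1 = p₀), μ z = 0 :=
        (Finset.sum_eq_zero_iff_of_nonneg
          (fun z hz => hμ z (Finset.mem_filter.mp hz).1)).mp hD0
      rw [hD0, mul_zero]
      exact Finset.sum_eq_zero fun z hzz => by rw [hz z hzz, zero_mul]
    · rw [condMean, ← hD, ← hN, div_mul_cancel₀ _ hD0]
  have h1 : ∑ z ∈ S.filter (fun z => z.1 = p₀), μ z * f z.1 * z.2
      = f p₀ * ∑ z ∈ S.filter (fun z => z.1 = p₀), μ z * z.2 := by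
    rw [Finset.mul_sum]
    exact Finset.sum_congr rfl fun z hz => by
      rw [(Finset.mem_filter.mp hz).2]; ring
  have h2 : ∑ z ∈ S.filter (fun z => z.1 = p₀), μ z * f z.1 * condMean S μ z.1
      = (f p₀ * condMean S μ p₀) * ∑ z ∈ S.filter (fun z => z.1 = p₀), μ z := by
    rw [Finset.mul_sum]
    exact Finset.sum_congr rfl fun z hz => by
      rw [(Finset.mem_filter.mp hz).2]; ring
  rw [h1, h2, key]; ring

lemma condMean_nonneg (S : Finset (ℝ×ℝ)) (μ : ℝ×ℝ→ℝ) (hμ : ∀ z ∈ S, 0 ≤ μ z)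
    (hsupp : ∀ z ∈ S, z.1 ∈ Set.Icc (0:ℝ) 1 ∧ (z.2 = 0 ∨ z.2 = 1)) (p₀ : ℝ) :
    0 ≤ condMean S μ p₀ := by
  apply div_nonneg
  · exact Finset.sum_nonneg fun z hz => by
      split_ifs
      · rcases (hsupp z hz).2 with h | h <;> rw [h] <;> simp [hμ z hz]
      · exact le_rfl
  · exact Finset.sum_nonneg fun z hz => by split_ifs; exacts [hμ z hz, le_rfl]

lemma condMean_le_one (S : Finset (ℝ×ℝ)) (μ : ℝ×ℝ→ℝ) (hμ : ∀ z ∈ S, 0 ≤ μ z)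
    (hsupp : ∀ z ∈ S, z.1 ∈ Set.Icc (0:ℝ) 1 ∧ (z.2 = 0 ∨ z.2 = 1)) (p₀ : ℝ) :
    condMean S μ p₀ ≤ 1 := by
  rcases eq_or_ne (∑ z ∈ S, if z.1 = p₀ then μ z else 0) 0 with hD | hD
  · rw [condMean, hD, div_zero]; norm_num
  · have hDpos : 0 < ∑ z ∈ S, if z.1 = p₀ then μ z else 0 := by
      refine lt_of_le_of_ne ?_ (Ne.symm hD)
      exact Finset.sum_nonneg fun z hz => by split_ifs; exacts [hμ z hz, le_rfl]
    rw [condMean, div_le_one hDpos]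
    refine Finset.sum_le_sum fun z hz => ?_
    split_ifs
    · rcases (hsupp z hz).2 with h | h <;> rw [h] <;> simp [hμ z hz]
    · exact le_rfl

lemma step_integrable (a b p c1 c2 : ℝ) :
    IntervalIntegrable (fun t => if p ≤ t then c1 else c2) volume a b := by
  have hfe : (fun t => if p ≤ t then c1 else c2)
      = fun t => c2 + (Set.Ici p).indicator (fun _ => c1 - c2) t := by
    funext t
    by_cases h : p ≤ t <;> simp [Set.indicator, Set.mem_Ici, h]
  rw [hfe]
  refine intervalIntegrable_const.add ?_
  constructor <;>
    exact ((integrableOn_const measure_Ioc_lt_top.ne).indicator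
      measurableSet_Ici)

lemma step_integral (a b p c1 c2 : ℝ) (hab : a ≤ b) :
    ∫ t in a..b, (if p ≤ t then c1 else c2)
      = c1 * (b - min (max p a) b) + c2 * (min (max p a) b - a) := by
  set mid := min (max p a) b with hmid
  have hamid : a ≤ mid := le_min (le_max_right _ _) hab
  have hmidb : mid ≤ b := min_le_right _ _
  have hcong : ∫ t in a..b, (if p ≤ t then c1 else c2)
      = ∫ t in a..b, (c1 + Set.indicator {x | x ≤ mid} (fun _ => c2 - c1) t) := by
    apply intervalIntegral.integral_congr_ae
    have hne : ∀ᵐ t : ℝ, t ≠ p := by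
      refine ae_iff.mpr ?_
      have : {t : ℝ | ¬t ≠ p} = {p} := by ext t; simp
      rw [this]
      exact measure_singleton p
    filter_upwards [hne] with t ht htab
    rw [Set.uIoc_of_le hab] at htab
    obtain ⟨hat, htb⟩ := htab
    by_cases h : p ≤ t
    · have hp : p < t := lt_of_le_of_ne h (Ne.symm ht)
      have : ¬ t ≤ mid := by
        push_neg
        exact lt_of_le_of_lt (min_le_left _ _) (max_lt hp hat)
      simp [h, this, Set.indicator]
    · have : t ≤ mid := by
        push_neg at h
        exact le_min (le_max_of_le_left h.le) htb
      simp [h, this, Set.indicator]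
  rw [hcong]
  have hind : IntervalIntegrable (Set.indicator {x | x ≤ mid} (fun _ : ℝ => c2 - c1))
      volume a b := by
    have : {x : ℝ | x ≤ mid} = Set.Iic mid := rfl
    rw [this]
    constructor <;>
      exact ((integrableOn_const measure_Ioc_lt_top.ne).indicator
        measurableSet_Iic)
  rw [integral_add intervalIntegrable_const hind, intervalIntegral.integral_const,
    integral_indicator ⟨hamid, hmidb⟩, intervalIntegral.integral_const]
  simp only [smul_eq_mul]
  ring

lemma clamp_eq {m : ℕ} (hm : 0 < m) (i : ℕ) (x : ℝ) :
    max (min ((i:ℝ) + 1 - m * x) 1) 0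
      = m * (((i:ℝ)+1)/m - min (max x ((i:ℝ)/m)) (((i:ℝ)+1)/m)) := by
  have hm' : (0:ℝ) < m := by exact_mod_cast hm
  rcases le_total x ((i:ℝ)/m) with h | h
  · have hmx : m * x ≤ i := by rwa [le_div_iff₀ hm', mul_comm] at h
    have e1 : min ((i:ℝ)+1 - m*x) 1 = 1 := min_eq_right (by linarith)
    have e2 : max x ((i:ℝ)/m) = (i:ℝ)/m := max_eq_right h
    have e3 : min ((i:ℝ)/m) (((i:ℝ)+1)/m) = (i:ℝ)/m := min_eq_left (by gcongr <;> linarith)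
    rw [e1, e2, e3, max_eq_left zero_le_one]
    field_simp
    ring
  · rcases le_total x (((i:ℝ)+1)/m) with h2 | h2
    · have h1 : (i:ℝ) ≤ m * x := by rwa [div_le_iff₀ hm', mul_comm] at h
      have h2' : m * x ≤ (i:ℝ) + 1 := by rwa [le_div_iff₀ hm', mul_comm] at h2
      have e2 : max x ((i:ℝ)/m) = x := max_eq_left h
      have e3 : min x (((i:ℝ)+1)/m) = x := min_eq_left h2
      have e1 : min ((i:ℝ)+1 - m*x) 1 = (i:ℝ)+1 - m*x := min_eq_left (by linarith)
      rw [e2, e3, e1, max_eq_left (by linarith)]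
      field_simp
    · have h2' : (i:ℝ) + 1 ≤ m * x := by rwa [div_le_iff₀ hm', mul_comm] at h2
      have e2 : max x ((i:ℝ)/m) = x := max_eq_left h
      have e3 : min x (((i:ℝ)+1)/m) = ((i:ℝ)+1)/m := min_eq_right h2
      have e1 : min ((i:ℝ)+1 - m*x) 1 = (i:ℝ)+1 - m*x := min_eq_left (by linarith)
      rw [e2, e3, e1, max_eq_right (by linarith)]
      ring

lemma binW_nonneg {α : Type*} (m : ℕ) (J : Finset α) (ν : α → ℝ) (p : α → ℝ)
    (hν : ∀ z ∈ J, 0 ≤ ν z) (i : ℕ) : 0 ≤ binW m J ν p i :=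
  Finset.sum_nonneg fun z hz => mul_nonneg (hν z hz) (tri_nonneg _ _ _)

lemma binQ_le_one {α : Type*} (m : ℕ) (J : Finset α) (ν : α → ℝ) (p y : α → ℝ)
    (hν : ∀ z ∈ J, 0 ≤ ν z) (hy : ∀ z ∈ J, 0 ≤ y z ∧ y z ≤ 1) (i : ℕ) :
    binQ m J ν p y i ≤ 1 := by
  rcases eq_or_ne (binW m J ν p i) 0 with h | h
  · rw [binQ, h, div_zero]; norm_num
  · have hpos : 0 < binW m J ν p i :=
      lt_of_le_of_ne (binW_nonneg m J ν p hν i) (Ne.symm h)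
    rw [binQ, div_le_one hpos]
    refine Finset.sum_le_sum fun z hz => ?_
    exact mul_le_of_le_one_right
      (mul_nonneg (hν z hz) (tri_nonneg _ _ _)) (hy z hz).2

end Aux

set_option maxHeartbeats 2000000 in
/-- for every positive integer `m` and index `i ≤ m` the soft-binned
quantity `SCFDL_{m,i}(D)` is at most `sup_{t ∈ [0,1]} E[max(q-t,0)·1[p≤t] + max(t-q,0)·1[p>t]]`;
hence `SCDL_m(D)` is at most this supremum, and `SCDL_m(D) ≤ CDL(D)` for any `CDL(D)`
upper-bounding the supremum. -/
theorem SCFDL_le_sup_fixedLoss (S : Finset (ℝ × ℝ)) (μ : ℝ × ℝ → ℝ)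
    (hμ : ∀ z ∈ S, 0 ≤ μ z) (hsum : ∑ z ∈ S, μ z = 1)
    (hsupp : ∀ z ∈ S, z.1 ∈ Set.Icc (0:ℝ) 1 ∧ (z.2 = 0 ∨ z.2 = 1))
    (m : ℕ) (hm : 0 < m) :
    (∀ i : ℕ, i ≤ m →
        SCFDL m S μ Prod.fst Prod.snd i ≤ sSup (fixedLoss S μ '' Set.Icc 0 1))
    ∧ SCDLm m S μ Prod.fst Prod.snd ≤ sSup (fixedLoss S μ '' Set.Icc 0 1)
    ∧ ∀ CDL : ℝ, sSup (fixedLoss S μ '' Set.Icc 0 1) ≤ CDL →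
        SCDLm m S μ Prod.fst Prod.snd ≤ CDL := by
  have hm' : (0:ℝ) < m := by exact_mod_cast hm
  set K := sSup (fixedLoss S μ '' Set.Icc 0 1) with hK
  have hfb : ∀ t ∈ Set.Icc (0:ℝ) 1, fixedLoss S μ t ≤ 1 := by
    intro t ht
    rw [fixedLoss, ← hsum]
    refine Finset.sum_le_sum fun z hz => ?_
    have hq0 := condMean_nonneg S μ hμ hsupp z.1
    have hq1 := condMean_le_one S μ hμ hsupp z.1
    have hfac : (if z.1 ≤ t then max (condMean S μ z.1 - t) 0
        else max (t - condMean S μ z.1) 0) ≤ 1 := by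
      split_ifs
      · exact max_le (by linarith [ht.1]) zero_le_one
      · exact max_le (by linarith [ht.2]) zero_le_one
    exact mul_le_of_le_one_right (hμ z hz) hfac
  have hbdd : BddAbove (fixedLoss S μ '' Set.Icc 0 1) := by
    refine ⟨1, ?_⟩
    rintro y ⟨t, ht, rfl⟩
    exact hfb t ht
  have hfK : ∀ t ∈ Set.Icc (0:ℝ) 1, fixedLoss S μ t ≤ K := fun t ht =>
    le_csSup hbdd ⟨t, ht, rfl⟩
  have hf0 : 0 ≤ fixedLoss S μ 0 :=
    Finset.sum_nonneg fun z hz => mul_nonneg (hμ z hz)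
      (by split_ifs <;> exact le_max_right _ _)
  have hK0 : 0 ≤ K := le_trans hf0 (hfK 0 (by norm_num))
  have hy01 : ∀ z ∈ S, 0 ≤ Prod.snd z ∧ Prod.snd z ≤ 1 := by
    intro z hz
    rcases (hsupp z hz).2 with h | h <;> constructor <;> simp [h]
  have key : ∀ i : ℕ, i ≤ m → SCFDL m S μ Prod.fst Prod.snd i ≤ K := by
    intro i hi
    rcases eq_or_lt_of_le hi with rfl | hilt
    · -- case i = m
      have h2 : Finset.Icc (i+1) i = ∅ := Finset.Icc_eq_empty (by omega)
      have h1 : ∀ j ∈ Finset.range (i+1),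
          binW i S μ Prod.fst j * max (binQ i S μ Prod.fst Prod.snd j - ((i:ℝ)+1)/i) 0
            = 0 := by
        intro j _
        have hq : binQ i S μ Prod.fst Prod.snd j ≤ 1 :=
          binQ_le_one i S μ Prod.fst Prod.snd hμ hy01 j
        have hb1 : (1:ℝ) ≤ ((i:ℝ)+1)/i := by
          rw [le_div_iff₀ hm']
          linarith
        rw [max_eq_right (by linarith), mul_zero]
      simp only [SCFDL, h2, Finset.sum_empty, add_zero]
      rw [Finset.sum_eq_zero h1]
      exact hK0
    · -- case i < m
      have hiR : ((i:ℝ)+1) ≤ m := by exact_mod_cast hilt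
      obtain ⟨a, ha⟩ : ∃ x:ℝ, x = (i:ℝ)/m := ⟨_, rfl⟩
      obtain ⟨b, hb⟩ : ∃ x:ℝ, x = ((i:ℝ)+1)/m := ⟨_, rfl⟩
      have hab : a ≤ b := by rw [ha, hb]; gcongr; linarith
      have ha0 : 0 ≤ a := by rw [ha]; positivity
      have hb1 : b ≤ 1 := by rw [hb, div_le_one hm']; linarith
      have hmba : (m:ℝ) * (b - a) = 1 := by rw [ha, hb]; field_simp; ring
      -- partial sums of triangle weights
      have hAsum : ∀ z ∈ S, ∑ j ∈ Finset.range (i+1), tri m j z.1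
          = max (min ((i:ℝ)+1 - m * z.1) 1) 0 := by
        intro z hz
        have h0 : 0 ≤ (m:ℝ) * z.1 := mul_nonneg m.cast_nonneg (hsupp z hz).1.1
        simpa [tri] using sum_max_abs i h0
      have hAcomp : ∀ z ∈ S, ∑ j ∈ Finset.Icc (i+1) m, tri m j z.1
          = 1 - max (min ((i:ℝ)+1 - m * z.1) 1) 0 := by
        intro z hz
        have h0 : 0 ≤ (m:ℝ) * z.1 := mul_nonneg m.cast_nonneg (hsupp z hz).1.1
        have h1 : (m:ℝ) * z.1 ≤ m := by
          have h2 := (hsupp z hz).1.2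
          nlinarith [hm'.le]
        have htot : ∑ j ∈ Finset.range (m+1), tri m j z.1 = 1 := by
          calc ∑ j ∈ Finset.range (m+1), tri m j z.1
              = max (min ((m:ℝ)+1 - m*z.1) 1) 0 := by
                simpa [tri] using sum_max_abs m h0
            _ = 1 := by rw [min_eq_right (by linarith), max_eq_left zero_le_one]
        have hsplit : ∑ j ∈ Finset.range (i+1), tri m j z.1
            + ∑ j ∈ Finset.Icc (i+1) m, tri m j z.1
            = ∑ j ∈ Finset.range (m+1), tri m j z.1 := by
          rw [Finset.range_eq_Ico, Finset.range_eq_Ico, ← Finset.Ico_add_one_right_eq_Icc]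
          exact Finset.sum_Ico_consecutive (fun j => tri m j z.1) (m := 0) (n := i+1) (k := m+1) (by omega) (by omega)
        have hA := hAsum z hz
        linarith
      -- Jensen per bin
      have hj1 : ∀ j, binW m S μ Prod.fst j
          * max (binQ m S μ Prod.fst Prod.snd j - b) 0
          ≤ ∑ z ∈ S, μ z * tri m j z.1 * max (condMean S μ z.1 - b) 0 := by
        intro j
        have hreg : ∑ z ∈ S, μ z * tri m j z.1 * z.2
            = ∑ z ∈ S, μ z * tri m j z.1 * condMean S μ z.1 :=
          regroup S μ hμ (tri m j)
        have hjm := jensen_max S (fun z => μ z * tri m j z.1)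
          (fun z => condMean S μ z.1)
          (fun z hz => mul_nonneg (hμ z hz) (tri_nonneg _ _ _)) b
        simp only [binW, binQ]
        rw [hreg]
        exact hjm
      have hj2 : ∀ j, binW m S μ Prod.fst j
          * max (a - binQ m S μ Prod.fst Prod.snd j) 0
          ≤ ∑ z ∈ S, μ z * tri m j z.1 * max (a - condMean S μ z.1) 0 := by
        intro j
        have hreg : ∑ z ∈ S, μ z * tri m j z.1 * z.2
            = ∑ z ∈ S, μ z * tri m j z.1 * condMean S μ z.1 :=
          regroup S μ hμ (tri m j)
        have hjm := jensen_max' S (fun z => μ z * tri m j z.1)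
          (fun z => condMean S μ z.1)
          (fun z hz => mul_nonneg (hμ z hz) (tri_nonneg _ _ _)) a
        simp only [binW, binQ]
        rw [hreg]
        exact hjm
      -- step A
      have stepA : SCFDL m S μ Prod.fst Prod.snd i
          ≤ ∑ z ∈ S, μ z * (max (min ((i:ℝ)+1 - m * z.1) 1) 0
              * max (condMean S μ z.1 - b) 0
            + (1 - max (min ((i:ℝ)+1 - m * z.1) 1) 0)
              * max (a - condMean S μ z.1) 0) := by
        have s1 : ∑ j ∈ Finset.range (i+1), binW m S μ Prod.fst j
            * max (binQ m S μ Prod.fst Prod.snd j - b) 0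
            ≤ ∑ z ∈ S, μ z * (max (min ((i:ℝ)+1 - m * z.1) 1) 0
                * max (condMean S μ z.1 - b) 0) := by
          calc ∑ j ∈ Finset.range (i+1), binW m S μ Prod.fst j
              * max (binQ m S μ Prod.fst Prod.snd j - b) 0
              ≤ ∑ j ∈ Finset.range (i+1), ∑ z ∈ S,
                  μ z * tri m j z.1 * max (condMean S μ z.1 - b) 0 :=
                Finset.sum_le_sum fun j _ => hj1 j
            _ = ∑ z ∈ S, ∑ j ∈ Finset.range (i+1),
                  μ z * tri m j z.1 * max (condMean S μ z.1 - b) 0 :=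
                Finset.sum_comm
            _ = ∑ z ∈ S, μ z * (max (min ((i:ℝ)+1 - m * z.1) 1) 0
                  * max (condMean S μ z.1 - b) 0) := by
                refine Finset.sum_congr rfl fun z hz => ?_
                rw [show ∑ j ∈ Finset.range (i+1),
                    μ z * tri m j z.1 * max (condMean S μ z.1 - b) 0
                    = (∑ j ∈ Finset.range (i+1), tri m j z.1)
                      * (μ z * max (condMean S μ z.1 - b) 0) from by
                  rw [Finset.sum_mul]
                  exact Finset.sum_congr rfl fun j _ => by ring]
                rw [hAsum z hz]; ring
        have s2 : ∑ j ∈ Finset.Icc (i+1) m, binW m S μ Prod.fst j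
            * max (a - binQ m S μ Prod.fst Prod.snd j) 0
            ≤ ∑ z ∈ S, μ z * ((1 - max (min ((i:ℝ)+1 - m * z.1) 1) 0)
                * max (a - condMean S μ z.1) 0) := by
          calc ∑ j ∈ Finset.Icc (i+1) m, binW m S μ Prod.fst j
              * max (a - binQ m S μ Prod.fst Prod.snd j) 0
              ≤ ∑ j ∈ Finset.Icc (i+1) m, ∑ z ∈ S,
                  μ z * tri m j z.1 * max (a - condMean S μ z.1) 0 :=
                Finset.sum_le_sum fun j _ => hj2 j
            _ = ∑ z ∈ S, ∑ j ∈ Finset.Icc (i+1) m,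
                  μ z * tri m j z.1 * max (a - condMean S μ z.1) 0 :=
                Finset.sum_comm
            _ = ∑ z ∈ S, μ z * ((1 - max (min ((i:ℝ)+1 - m * z.1) 1) 0)
                  * max (a - condMean S μ z.1) 0) := by
                refine Finset.sum_congr rfl fun z hz => ?_
                rw [show ∑ j ∈ Finset.Icc (i+1) m,
                    μ z * tri m j z.1 * max (a - condMean S μ z.1) 0
                    = (∑ j ∈ Finset.Icc (i+1) m, tri m j z.1)
                      * (μ z * max (a - condMean S μ z.1) 0) from by
                  rw [Finset.sum_mul]
                  exact Finset.sum_congr rfl fun j _ => by ring]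
                rw [hAcomp z hz]; ring
        calc SCFDL m S μ Prod.fst Prod.snd i
            = ∑ j ∈ Finset.range (i+1), binW m S μ Prod.fst j
                * max (binQ m S μ Prod.fst Prod.snd j - b) 0
              + ∑ j ∈ Finset.Icc (i+1) m, binW m S μ Prod.fst j
                * max (a - binQ m S μ Prod.fst Prod.snd j) 0 := by
              rw [SCFDL, ← ha, ← hb]
          _ ≤ _ := by
              refine le_trans (add_le_add s1 s2) ?_
              rw [← Finset.sum_add_distrib]
              exact le_of_eq (Finset.sum_congr rfl fun z hz => by ring)
      -- step B : integral representation
      have hIcalc : ∫ t in a..b, (∑ z ∈ S, μ z *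
            (if z.1 ≤ t then max (condMean S μ z.1 - b) 0
              else max (a - condMean S μ z.1) 0))
          = ∑ z ∈ S, μ z * (max (condMean S μ z.1 - b) 0
                * (b - min (max z.1 a) b)
              + max (a - condMean S μ z.1) 0 * (min (max z.1 a) b - a)) := by
        have hfs := intervalIntegral.integral_finset_sum (μ := MeasureTheory.volume)
          (a := a) (b := b) (s := S)
          (f := fun (z : ℝ × ℝ) (t : ℝ) => μ z *
            (if z.1 ≤ t then max (condMean S μ z.1 - b) 0
              else max (a - condMean S μ z.1) 0))
          (fun z _ => (step_integrable a b z.1 _ _).const_mul (μ z))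
        rw [hfs]
        refine Finset.sum_congr rfl fun z _ => ?_
        rw [intervalIntegral.integral_const_mul, step_integral _ _ _ _ _ hab]
      -- the bracket equals m times the integrand bracket
      have hAz : ∀ x : ℝ, max (min ((i:ℝ)+1 - m*x) 1) 0
          = m * (b - min (max x a) b) := by
        intro x
        rw [ha, hb]
        exact clamp_eq hm i x
      have h1A : ∀ x : ℝ, 1 - max (min ((i:ℝ)+1 - m*x) 1) 0
          = m * (min (max x a) b - a) := by
        intro x
        have e : (m:ℝ) * (b - min (max x a) b) + m * (min (max x a) b - a)
            = m * (b - a) := by ring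
        have := hAz x
        linarith
      have stepB : ∑ z ∈ S, μ z * (max (min ((i:ℝ)+1 - m * z.1) 1) 0
              * max (condMean S μ z.1 - b) 0
            + (1 - max (min ((i:ℝ)+1 - m * z.1) 1) 0)
              * max (a - condMean S μ z.1) 0)
          = m * ∫ t in a..b, (∑ z ∈ S, μ z *
            (if z.1 ≤ t then max (condMean S μ z.1 - b) 0
              else max (a - condMean S μ z.1) 0)) := by
        rw [hIcalc, Finset.mul_sum]
        refine Finset.sum_congr rfl fun z _ => ?_
        rw [h1A z.1, hAz z.1]
        ring
      -- step C : bound the integral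
      have hint : IntervalIntegrable (fun t => ∑ z ∈ S, μ z *
            (if z.1 ≤ t then max (condMean S μ z.1 - b) 0
              else max (a - condMean S μ z.1) 0)) MeasureTheory.volume a b := by
        have := IntervalIntegrable.sum S
          (f := fun (z : ℝ × ℝ) (t : ℝ) => μ z *
            (if z.1 ≤ t then max (condMean S μ z.1 - b) 0
              else max (a - condMean S μ z.1) 0))
          (fun z _ => (step_integrable a b z.1 _ _).const_mul (μ z))
        rwa [Finset.sum_fn] at this
      have hle : ∀ t ∈ Set.Icc a b, (∑ z ∈ S, μ z *
            (if z.1 ≤ t then max (condMean S μ z.1 - b) 0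
              else max (a - condMean S μ z.1) 0)) ≤ K := by
        intro t ht
        have ht01 : t ∈ Set.Icc (0:ℝ) 1 := ⟨le_trans ha0 ht.1, le_trans ht.2 hb1⟩
        refine le_trans ?_ (hfK t ht01)
        rw [fixedLoss]
        refine Finset.sum_le_sum fun z hz => mul_le_mul_of_nonneg_left ?_ (hμ z hz)
        split_ifs with h
        · exact max_le_max (by linarith [ht.2]) le_rfl
        · exact max_le_max (by linarith [ht.1]) le_rfl
      have hIle : ∫ t in a..b, (∑ z ∈ S, μ z *
            (if z.1 ≤ t then max (condMean S μ z.1 - b) 0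
              else max (a - condMean S μ z.1) 0)) ≤ (b - a) * K := by
        have h1 := intervalIntegral.integral_mono_on hab hint
          intervalIntegrable_const hle
        rwa [intervalIntegral.integral_const, smul_eq_mul] at h1
      calc SCFDL m S μ Prod.fst Prod.snd i ≤ _ := stepA
        _ = m * ∫ t in a..b, (∑ z ∈ S, μ z *
            (if z.1 ≤ t then max (condMean S μ z.1 - b) 0
              else max (a - condMean S μ z.1) 0)) := stepB
        _ ≤ m * ((b - a) * K) := by
            exact mul_le_mul_of_nonneg_left hIle hm'.le
        _ = K := by rw [← mul_assoc, hmba, one_mul]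
  refine ⟨key, ?_, ?_⟩
  · exact Finset.sup'_le _ _ fun i hiR =>
      key i (Nat.lt_succ_iff.mp (Finset.mem_range.mp hiR))
  · intro CDL hC
    exact le_trans (Finset.sup'_le _ _ fun i hiR =>
      key i (Nat.lt_succ_iff.mp (Finset.mem_range.mp hiR))) hC
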